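/- Every minimal prime of the binomial edge ideal $J_{C_4}$ of the 4-cycle has local v-number equal to $2$; in particular $\mathrm{v}(J_{C_4})=2$. -/

import Mathlib

open MvPolynomial

set_option synthInstance.maxHeartbeats 1000000

namespace Paper

noncomputable section

variable (K : Type) [Field K]

/-- The v-number of a graded ideal `I`: the least `d` such that there is a homogeneous
polynomial `f` of degree `d` with `(I : f)` an associated prime of `R/I`. -/
def vNumber {σ : Type} (I : Ideal (MvPolynomial σ K)) : ℕ :=
  sInf {d : ℕ | ∃ f : MvPolynomial σ K, f.IsHomogeneous d ∧
    IsAssociatedPrime (Submodule.colon I (Ideal.span {f})) (MvPolynomial σ K ⧸ I)}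

/-- The local v-number of `I` at a prime `P`. -/
def vLocal {σ : Type} (I P : Ideal (MvPolynomial σ K)) : ℕ :=
  sInf {d : ℕ | ∃ f : MvPolynomial σ K, f.IsHomogeneous d ∧
    Submodule.colon I (Ideal.span {f}) = P}

/-- The edge binomial `f_{ij} = x_i y_j - x_j y_i`. -/
def bedge {V : Type} (i j : V) : MvPolynomial (V ⊕ V) K :=
  X (Sum.inl i) * X (Sum.inr j) - X (Sum.inl j) * X (Sum.inr i)

/-- The binomial edge ideal of a graph `G`. -/
def beIdeal {V : Type} (G : SimpleGraph V) : Ideal (MvPolynomial (V ⊕ V) K) :=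
  Ideal.span {p | ∃ i j : V, G.Adj i j ∧ p = bedge K i j}

/-- The (monomial) edge ideal of a graph `G`. -/
def edgeIdealM {V : Type} (G : SimpleGraph V) : Ideal (MvPolynomial V K) :=
  Ideal.span {p | ∃ i j : V, G.Adj i j ∧ p = X i * X j}

/-- `i` and `j` are connected by a walk in `G` avoiding the set `S`. -/
def ReachAvoid {V : Type} (G : SimpleGraph V) (S : Set V) (i j : V) : Prop :=
  ∃ w : G.Walk i j, ∀ v ∈ w.support, v ∉ S

/-- The disjoint union of complete graphs on the connected components of `G ∖ S`. -/
def tildeG {V : Type} (G : SimpleGraph V) (S : Set V) : SimpleGraph V where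
  Adj i j := i ≠ j ∧ ReachAvoid G S i j
  symm := by
    constructor
    rintro i j ⟨hne, w, hw⟩
    exact ⟨hne.symm, w.reverse, by
      intro v hv
      exact hw v (by simpa [SimpleGraph.Walk.support_reverse] using hv)⟩
  loopless := ⟨fun i h => h.1 rfl⟩

/-- The minimal prime `P_S` of the binomial edge ideal corresponding to a cut set `S`. -/
def PSIdeal {V : Type} (G : SimpleGraph V) (S : Set V) : Ideal (MvPolynomial (V ⊕ V) K) :=
  Ideal.span ((fun i => (X (Sum.inl i) : MvPolynomial (V ⊕ V) K)) '' S ∪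
      (fun i => (X (Sum.inr i) : MvPolynomial (V ⊕ V) K)) '' S)
    ⊔ beIdeal K (tildeG G S)

/-- Number of connected components of the induced subgraph on the complement of `S`. -/
def numComp {V : Type} (G : SimpleGraph V) (S : Set V) : ℕ :=
  Nat.card ((G.induce Sᶜ).ConnectedComponent)

/-- `S` is a cut set of `G`. -/
def IsCutSet {V : Type} (G : SimpleGraph V) (S : Set V) : Prop :=
  ∀ s ∈ S, numComp G (S \ {s}) < numComp G S

/-- `v` is a cut vertex of `G`. -/
def IsCutVertex {V : Type} (G : SimpleGraph V) (v : V) : Prop :=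
  numComp G (∅ : Set V) < numComp G {v}

/-- `G` is a cone graph: some vertex is adjacent to all others. -/
def IsConeGraph {V : Type} (G : SimpleGraph V) : Prop :=
  ∃ v : V, ∀ u : V, u ≠ v → G.Adj v u

/-- `G` (with its labelling by `Fin n`) is a closed graph. -/
def IsClosedGraph {n : ℕ} (G : SimpleGraph (Fin n)) : Prop :=
  ∀ i j k : Fin n, i < j → j < k → G.Adj i k → G.Adj i j ∧ G.Adj j k

/-- `R/I` is Cohen-Macaulay: there is a regular sequence (inside the irrelevant
maximal ideal) on `R/I` whose length is the Krull dimension of `R/I`. -/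
def IsCMQuot {σ : Type} (I : Ideal (MvPolynomial σ K)) : Prop :=
  ∃ rs : List (MvPolynomial σ K),
    (∀ f ∈ rs, f ∈ Ideal.span (Set.range (X : σ → MvPolynomial σ K))) ∧
    RingTheory.Sequence.IsRegular (MvPolynomial σ K ⧸ I)
      (rs.map (Ideal.Quotient.mk I)) ∧
    ((rs.length : ℕ) : WithBot (WithTop ℕ)) = ringKrullDim (MvPolynomial σ K ⧸ I)

section Regularity

variable {σ : Type} [Fintype σ] [DecidableEq σ]

/-- An arbitrary linear order on a finite type. -/
def fintypeLO (σ : Type) [Fintype σ] [DecidableEq σ] : LinearOrder σ :=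
  LinearOrder.lift' (Fintype.equivFin σ) (Fintype.equivFin σ).injective

/-- Term of homological degree `i` of the Koszul complex of `R/I` with respect to all the
variables; its homology computes `Tor_i(R/I, K)`. -/
abbrev KC (I : Ideal (MvPolynomial σ K)) (i : ℕ) : Type :=
  {T : Finset σ // T.card = i} → MvPolynomial σ K ⧸ I

/-- The Koszul differential. -/
def koszD (I : Ideal (MvPolynomial σ K)) (i : ℕ) (f : KC K I (i + 1)) : KC K I i :=
  letI LO := fintypeLO σ
  letI : (p : Prop) → Decidable p := Classical.propDecidable
  fun T => ∑ t ∈ (Finset.univ \ T.1).attach,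
    ((-1 : MvPolynomial σ K ⧸ I) ^ ((T.1.filter (fun a => LO.lt a t.1)).card)) *
      (Ideal.Quotient.mk I (X t.1) *
        f ⟨insert t.1 T.1, by
          rw [Finset.card_insert_of_notMem (Finset.mem_sdiff.mp t.2).2, T.2]⟩)

/-- Being a cycle in the Koszul complex. -/
def isCycle (I : Ideal (MvPolynomial σ K)) : (i : ℕ) → KC K I i → Prop
  | 0, _ => True
  | (i + 1), f => koszD K I i f = 0

/-- Nonvanishing of the graded Betti number `β_{i,j}(R/I)`: the `i`-th Koszul homology has a
nonzero class of internal degree `j`. -/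
def bettiNe (I : Ideal (MvPolynomial σ K)) (i j : ℕ) : Prop :=
  ∃ f : KC K I i,
    (∀ T, ∃ p : MvPolynomial σ K, p.IsHomogeneous (j - i) ∧ Ideal.Quotient.mk I p = f T) ∧
    isCycle K I i f ∧ ¬ ∃ g : KC K I (i + 1), koszD K I i g = f

/-- The Castelnuovo-Mumford regularity of `R/I`, as `max { j - i : β_{i,j}(R/I) ≠ 0 }`. -/
def reg (I : Ideal (MvPolynomial σ K)) : ℕ :=
  sSup {r : ℕ | ∃ i j : ℕ, j = i + r ∧ bettiNe K I i j}

end Regularity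

end

end Paper

namespace Paper

variable (K : Type) [Field K]

noncomputable section Dev

variable (K : Type) [Field K]

abbrev σ4 : Type := Fin 4 ⊕ Fin 4
abbrev R4 (K : Type) [Field K] : Type := MvPolynomial σ4 K

def vtx : σ4 → Fin 4 := Sum.elim id id

/-- evaluation killing the variables with vertex in `A` -/
def psi (A : Finset (Fin 4)) : R4 K →ₐ[K] R4 K :=
  aeval (fun s => if vtx s ∈ A then 0 else X s)

def PV (A : Finset (Fin 4)) : Ideal (R4 K) :=
  Ideal.span (X '' {s : σ4 | vtx s ∈ A})

lemma sub_psi_mem (A : Finset (Fin 4)) (p : R4 K) : p - psi K A p ∈ PV K A := by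
  induction p using MvPolynomial.induction_on with
  | C a => simp [psi]
  | add p q hp hq =>
      have : p + q - psi K A (p + q) = (p - psi K A p) + (q - psi K A q) := by
        rw [map_add]; ring
      rw [this]; exact add_mem hp hq
  | mul_X p s hp =>
      have : p * X s - psi K A (p * X s)
          = (p - psi K A p) * X s + psi K A p * (X s - psi K A (X s)) := by
        rw [map_mul]; ring
      rw [this]
      refine add_mem (Ideal.mul_mem_right _ _ hp) (Ideal.mul_mem_left _ _ ?_)
      by_cases h : vtx s ∈ A
      · have : psi K A (X s) = 0 := by simp [psi, h]
        rw [this, sub_zero]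
        exact Ideal.subset_span ⟨s, h, rfl⟩
      · have : psi K A (X s) = X s := by simp [psi, h]
        simp [this]

lemma PV_eq_ker (A : Finset (Fin 4)) : PV K A = RingHom.ker (psi K A : R4 K →+* R4 K) := by
  apply le_antisymm
  · rw [PV, Ideal.span_le]
    rintro p ⟨s, hs, rfl⟩
    simp only [SetLike.mem_coe, RingHom.mem_ker]
    have hs' : vtx s ∈ A := hs
    simp [psi, hs']
  · intro p hp
    have h0 : psi K A p = 0 := hp
    have := sub_psi_mem K A p
    rwa [h0, sub_zero] at this

instance PV_prime (A : Finset (Fin 4)) : (PV K A).IsPrime := by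
  rw [PV_eq_ker]; exact RingHom.ker_isPrime _




/-- the Segre-type map certifying primality of the determinantal ideal -/
def phi : R4 K →ₐ[K] MvPolynomial (Bool ⊕ Fin 4) K :=
  aeval (Sum.elim (fun i => X (Sum.inl true) * X (Sum.inr i))
                  (fun i => X (Sum.inl false) * X (Sum.inr i)))

/-- the ideal of all 2x2 minors -/
def I0 : Ideal (R4 K) := Ideal.span {p | ∃ i j : Fin 4, p = bedge K i j}

lemma phi_bedge (i j : Fin 4) : phi K (bedge K i j) = 0 := by
  simp only [bedge, phi, map_sub, map_mul, aeval_X, Sum.elim_inl, Sum.elim_inr]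
  ring

lemma I0_le_ker : I0 K ≤ RingHom.ker (phi K).toRingHom := by
  rw [I0, Ideal.span_le]
  rintro p ⟨i, j, rfl⟩
  simpa [RingHom.mem_ker] using phi_bedge K i j

def Mexp : σ4 → ((Bool ⊕ Fin 4) →₀ ℕ) :=
  Sum.elim (fun i => Finsupp.single (Sum.inl true) 1 + Finsupp.single (Sum.inr i) 1)
           (fun i => Finsupp.single (Sum.inl false) 1 + Finsupp.single (Sum.inr i) 1)

def Mmap (m : σ4 →₀ ℕ) : (Bool ⊕ Fin 4) →₀ ℕ := m.sum fun s k => k • Mexp s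

lemma phi_monomial (m : σ4 →₀ ℕ) (c : K) :
    phi K (monomial m c) = monomial (Mmap m) c := by
  rw [phi, aeval_monomial]
  have hg : ∀ s : σ4, ((Sum.elim (fun i => X (Sum.inl true) * X (Sum.inr i))
      (fun i => X (Sum.inl false) * X (Sum.inr i)) : σ4 → MvPolynomial (Bool ⊕ Fin 4) K) s)
      = monomial (Mexp s) 1 := by
    rintro (i | i) <;> simp [Mexp, X, monomial_mul]
  calc (algebraMap K _ c) * (m.prod fun s k => ((Sum.elim (fun i => X (Sum.inl true) * X (Sum.inr i))
      (fun i => X (Sum.inl false) * X (Sum.inr i)) : σ4 → MvPolynomial (Bool ⊕ Fin 4) K) s) ^ k)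
      = (algebraMap K _ c) * (m.prod fun s k => monomial (k • Mexp s) (1:K)) := by
        congr 1
        refine Finset.prod_congr rfl fun s _ => ?_
        simp only [hg s, monomial_pow, one_pow]
    _ = monomial (Mmap m) c := by
        rw [Finsupp.prod, ← monomial_sum_one, Mmap, Finsupp.sum]
        simp [algebraMap_eq, C_mul_monomial]

lemma Mmap_apply (m : σ4 →₀ ℕ) (a : Bool ⊕ Fin 4) :
    Mmap m a = ∑ s : σ4, m s * Mexp s a := by
  rw [Mmap, Finsupp.sum_apply]
  rw [Finsupp.sum_fintype]
  · exact Finset.sum_congr rfl fun s _ => by simp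
  · intro s; simp

lemma Mmap_inr (m : σ4 →₀ ℕ) (i : Fin 4) :
    Mmap m (Sum.inr i) = m (Sum.inl i) + m (Sum.inr i) := by
  rw [Mmap_apply, Fintype.sum_sum_type]
  simp [Mexp, Finsupp.single_apply, mul_ite, Finset.sum_ite_eq']

lemma Mmap_true (m : σ4 →₀ ℕ) :
    Mmap m (Sum.inl true) = ∑ j : Fin 4, m (Sum.inl j) := by
  rw [Mmap_apply, Fintype.sum_sum_type]
  simp [Mexp, Finsupp.single_apply]

lemma exists_sub_single {α : Type} (u : α →₀ ℕ) (a : α) (h : u a ≠ 0) :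
    ∃ v : α →₀ ℕ, u = v + Finsupp.single a 1 := by
  classical
  refine ⟨u - Finsupp.single a 1, ?_⟩
  ext s
  by_cases hs : a = s
  · subst hs
    simp [Finsupp.single_apply]
    omega
  · simp [Finsupp.single_apply, hs]

lemma swap_step (m m1 : σ4 →₀ ℕ) (i j : Fin 4) (hi : m (Sum.inl i) ≠ 0)
    (hj : m (Sum.inr j) ≠ 0)
    (hE : m + Finsupp.single (Sum.inl j) 1 + Finsupp.single (Sum.inr i) 1
        = m1 + Finsupp.single (Sum.inr j) 1 + Finsupp.single (Sum.inl i) 1) :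
    monomial m (1:K) - monomial m1 1 ∈ I0 K := by
  obtain ⟨v, hv⟩ := exists_sub_single m (Sum.inl i) hi
  have hvj : v (Sum.inr j) ≠ 0 := by
    have := DFunLike.congr_fun hv (Sum.inr j)
    simp only [Finsupp.add_apply, Finsupp.single_apply] at this
    simp only [reduceCtorEq, if_false, add_zero] at this
    omega
  obtain ⟨m0, hm0⟩ := exists_sub_single v (Sum.inr j) hvj
  have hm : m = m0 + Finsupp.single (Sum.inr j) 1 + Finsupp.single (Sum.inl i) 1 := by
    rw [hv, hm0]
  have hm1 : m1 = m0 + Finsupp.single (Sum.inl j) 1 + Finsupp.single (Sum.inr i) 1 := by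
    ext s
    have h1 := DFunLike.congr_fun hE s
    have h2 := DFunLike.congr_fun hm s
    simp only [Finsupp.add_apply] at h1 h2 ⊢
    omega
  have e1 : m = m0 + (Finsupp.single (Sum.inl i) 1 + Finsupp.single (Sum.inr j) 1) := by
    rw [hm]; abel
  have e2 : m1 = m0 + (Finsupp.single (Sum.inl j) 1 + Finsupp.single (Sum.inr i) 1) := by
    rw [hm1]; abel
  have hid : monomial m (1:K) - monomial m1 1 = monomial m0 1 * bedge K i j := by
    rw [e1, e2, bedge, mul_sub]
    simp only [X, monomial_mul, mul_one, one_mul]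
  rw [hid]
  exact Ideal.mul_mem_left _ _ (Ideal.subset_span ⟨i, j, rfl⟩)

lemma Mmap_false (m : σ4 →₀ ℕ) :
    Mmap m (Sum.inl false) = ∑ j : Fin 4, m (Sum.inr j) := by
  rw [Mmap_apply, Fintype.sum_sum_type]
  simp [Mexp, Finsupp.single_apply]

lemma sum_add_ite (f : Fin 4 → ℕ) (i : Fin 4) :
    ∑ k : Fin 4, (f k + if i = k then 1 else 0) = (∑ k : Fin 4, f k) + 1 := by
  rw [Finset.sum_add_distrib]
  simp

lemma classEq_aux : ∀ n : ℕ, ∀ m m' : σ4 →₀ ℕ,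
    (∑ k : Fin 4, ((m (Sum.inl k) - m' (Sum.inl k)) + (m' (Sum.inl k) - m (Sum.inl k)))) = n →
    Mmap m = Mmap m' → monomial m (1:K) - monomial m' 1 ∈ I0 K := by
  intro n
  induction n using Nat.strong_induction_on with
  | _ n ih =>
  intro m m' hn hM
  have hsum : ∀ k, m (Sum.inl k) + m (Sum.inr k) = m' (Sum.inl k) + m' (Sum.inr k) := by
    intro k
    have := DFunLike.congr_fun hM (Sum.inr k)
    rwa [Mmap_inr, Mmap_inr] at this
  have htot : ∑ k : Fin 4, m (Sum.inl k) = ∑ k : Fin 4, m' (Sum.inl k) := by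
    have := DFunLike.congr_fun hM (Sum.inl true)
    rwa [Mmap_true, Mmap_true] at this
  by_cases hall : ∀ k, m (Sum.inl k) = m' (Sum.inl k)
  · have : m = m' := by
      ext s
      rcases s with a | a
      · exact hall a
      · have h1 := hsum a
        have h2 := hall a
        omega
    rw [this, sub_self]
    exact zero_mem _
  · push_neg at hall
    obtain ⟨k0, hk0⟩ := hall
    have hex_gt : ∃ i, m' (Sum.inl i) < m (Sum.inl i) := by
      by_contra h
      push_neg at h
      have := Finset.sum_lt_sum (fun i (_ : i ∈ Finset.univ) => h i)
        ⟨k0, Finset.mem_univ k0, lt_of_le_of_ne (h k0) hk0⟩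
      omega
    have hex_lt : ∃ j, m (Sum.inl j) < m' (Sum.inl j) := by
      by_contra h
      push_neg at h
      have := Finset.sum_lt_sum (fun i (_ : i ∈ Finset.univ) => h i)
        ⟨k0, Finset.mem_univ k0, lt_of_le_of_ne (h k0) (Ne.symm hk0)⟩
      omega
    obtain ⟨i, hgt⟩ := hex_gt
    obtain ⟨j, hlt⟩ := hex_lt
    have hij : i ≠ j := fun h => by subst h; omega
    have hi : m (Sum.inl i) ≠ 0 := by omega
    have hj : m (Sum.inr j) ≠ 0 := by have := hsum j; omega
    -- construct the swapped monomial m1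
    have hui : ((m + Finsupp.single (Sum.inl j) 1 + Finsupp.single (Sum.inr i) 1 : σ4 →₀ ℕ)) (Sum.inl i) ≠ 0 := by
      simp only [Finsupp.add_apply, Finsupp.single_apply]
      split_ifs <;> omega
    obtain ⟨v, hv⟩ := exists_sub_single _ _ hui
    have hvj : v (Sum.inr j) ≠ 0 := by
      have h := DFunLike.congr_fun hv (Sum.inr j)
      simp [Finsupp.single_apply, hij] at h
      omega
    obtain ⟨m1, hm1⟩ := exists_sub_single v (Sum.inr j) hvj
    have hE : m + Finsupp.single (Sum.inl j) 1 + Finsupp.single (Sum.inr i) 1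
        = m1 + Finsupp.single (Sum.inr j) 1 + Finsupp.single (Sum.inl i) 1 := by
      rw [hv, hm1]
    have step := swap_step K m m1 i j hi hj hE
    have hA : ∀ k, m (Sum.inl k) + (if j = k then 1 else 0)
        = m1 (Sum.inl k) + (if i = k then 1 else 0) := by
      intro k
      have h := DFunLike.congr_fun hE (Sum.inl k)
      simpa [Finsupp.single_apply] using h
    have hB : ∀ k, m (Sum.inr k) + (if i = k then 1 else 0)
        = m1 (Sum.inr k) + (if j = k then 1 else 0) := by
      intro k
      have h := DFunLike.congr_fun hE (Sum.inr k)
      simpa [Finsupp.single_apply] using h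
    have hM1 : Mmap m1 = Mmap m' := by
      rw [← hM]
      ext a
      rcases a with b | k
      · cases b
        · rw [Mmap_false, Mmap_false]
          have t1 : (∑ k : Fin 4, (m1 (Sum.inr k))) + 1 = (∑ k : Fin 4, (m (Sum.inr k))) + 1 := by
            rw [← sum_add_ite (fun k => m1 (Sum.inr k)) j, ← sum_add_ite (fun k => m (Sum.inr k)) i]
            exact Finset.sum_congr rfl (fun k _ => (hB k).symm)
          omega
        · rw [Mmap_true, Mmap_true]
          have t1 : (∑ k : Fin 4, (m1 (Sum.inl k))) + 1 = (∑ k : Fin 4, (m (Sum.inl k))) + 1 := by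
            rw [← sum_add_ite (fun k => m1 (Sum.inl k)) i, ← sum_add_ite (fun k => m (Sum.inl k)) j]
            exact Finset.sum_congr rfl (fun k _ => (hA k).symm)
          omega
      · rw [Mmap_inr, Mmap_inr]
        have a := hA k
        have b := hB k
        split_ifs at a b <;> omega
    have hmeas : (∑ k : Fin 4, ((m1 (Sum.inl k) - m' (Sum.inl k)) + (m' (Sum.inl k) - m1 (Sum.inl k)))) < n := by
      rw [← hn]
      apply Finset.sum_lt_sum
      · intro k _
        have a := hA k
        by_cases h1 : i = k
        · subst h1
          simp [Ne.symm hij] at a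
          omega
        · by_cases h2 : j = k
          · subst h2
            simp [hij, h1] at a
            omega
          · simp [h1, h2] at a
            omega
      · refine ⟨j, Finset.mem_univ j, ?_⟩
        have a := hA j
        simp [hij] at a
        omega
    have hrec := ih _ hmeas m1 m' rfl hM1
    have := add_mem step hrec
    rwa [sub_add_sub_cancel] at this

lemma classEq (m m' : σ4 →₀ ℕ) (hM : Mmap m = Mmap m') :
    monomial m (1:K) - monomial m' 1 ∈ I0 K :=
  classEq_aux K _ m m' rfl hM

lemma ker_phi_eq : RingHom.ker (phi K).toRingHom = I0 K := by
  classical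
  refine le_antisymm ?_ (I0_le_ker K)
  intro p hp
  have hp0 : phi K p = 0 := hp
  let q : R4 K →ₗ[K] (R4 K ⧸ I0 K) := (Ideal.Quotient.mkₐ K (I0 K)).toLinearMap
  let Θ : MvPolynomial (Bool ⊕ Fin 4) K →ₗ[K] (R4 K ⧸ I0 K) :=
    (basisMonomials (Bool ⊕ Fin 4) K).constr K fun μ =>
      if h : ∃ m : σ4 →₀ ℕ, Mmap m = μ then q (monomial h.choose 1) else 0
  have hext : Θ ∘ₗ (phi K).toLinearMap = q := by
    apply (basisMonomials σ4 K).ext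
    intro m
    have hbm : (basisMonomials σ4 K) m = monomial m (1:K) := by rw [coe_basisMonomials]
    rw [hbm]
    show Θ (phi K (monomial m 1)) = q (monomial m 1)
    rw [phi_monomial]
    have hb : (monomial (Mmap m) (1:K)) = (basisMonomials (Bool ⊕ Fin 4) K) (Mmap m) := by
      rw [coe_basisMonomials]
    rw [hb, Module.Basis.constr_basis]
    rw [dif_pos (⟨m, rfl⟩ : ∃ m' : σ4 →₀ ℕ, Mmap m' = Mmap m)]
    have hch : Mmap (⟨m, rfl⟩ : ∃ m' : σ4 →₀ ℕ, Mmap m' = Mmap m).choose = Mmap m :=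
      (⟨m, rfl⟩ : ∃ m' : σ4 →₀ ℕ, Mmap m' = Mmap m).choose_spec
    have hmem := classEq K _ _ hch
    have h0 : q (monomial (⟨m, rfl⟩ : ∃ m' : σ4 →₀ ℕ, Mmap m' = Mmap m).choose 1)
        - q (monomial m 1) = 0 := by
      rw [← map_sub]
      exact (Submodule.Quotient.mk_eq_zero _).mpr hmem
    rw [sub_eq_zero] at h0
    exact h0
  have : q p = 0 := by
    have := congrFun (congrArg (fun (L : R4 K →ₗ[K] (R4 K ⧸ I0 K)) => (L : R4 K → _)) hext) p
    simp only [LinearMap.coe_comp, Function.comp_apply, AlgHom.toLinearMap_apply] at this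
    rw [← this, hp0, map_zero]
  exact (Submodule.Quotient.mk_eq_zero _).mp this

abbrev J4 (K : Type) [Field K] : Ideal (R4 K) := beIdeal K (SimpleGraph.cycleGraph 4)

lemma bedge_mem_J4 (i j : Fin 4) (h : (SimpleGraph.cycleGraph 4).Adj i j) :
    bedge K i j ∈ J4 K :=
  Ideal.subset_span ⟨i, j, h, rfl⟩

lemma J4_le_I0 : J4 K ≤ I0 K := by
  rw [J4, beIdeal, I0]
  apply Ideal.span_le.mpr
  rintro p ⟨i, j, _, rfl⟩
  exact Ideal.subset_span ⟨i, j, rfl⟩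

lemma J4_le_ker_phi : J4 K ≤ RingHom.ker (phi K).toRingHom := by
  rw [ker_phi_eq]; exact J4_le_I0 K

lemma X_mem_PV (s : σ4) (A : Finset (Fin 4)) (h : vtx s ∈ A) : X s ∈ PV K A :=
  Ideal.subset_span ⟨s, h, rfl⟩

lemma bedge_mem_PV (i j : Fin 4) (A : Finset (Fin 4)) (h : i ∈ A ∨ j ∈ A) :
    bedge K i j ∈ PV K A := by
  rw [bedge]
  rcases h with h | h
  · exact sub_mem (Ideal.mul_mem_right _ _ (X_mem_PV K (Sum.inl i) A h))
      (Ideal.mul_mem_left _ _ (X_mem_PV K (Sum.inr i) A h))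
  · exact sub_mem (Ideal.mul_mem_left _ _ (X_mem_PV K (Sum.inr j) A h))
      (Ideal.mul_mem_right _ _ (X_mem_PV K (Sum.inl j) A h))

lemma J4_le_P1 : J4 K ≤ PV K {1, 3} := by
  rw [J4, beIdeal]
  apply Ideal.span_le.mpr
  rintro p ⟨i, j, hadj, rfl⟩
  apply bedge_mem_PV
  fin_cases i <;> fin_cases j <;> revert hadj <;> decide

lemma J4_le_P2 : J4 K ≤ PV K {0, 2} := by
  rw [J4, beIdeal]
  apply Ideal.span_le.mpr
  rintro p ⟨i, j, hadj, rfl⟩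
  apply bedge_mem_PV
  fin_cases i <;> fin_cases j <;> revert hadj <;> decide

section Identities
variable (i j : Fin 4)

lemma adj01 : (SimpleGraph.cycleGraph 4).Adj 0 1 := by decide
lemma adj12 : (SimpleGraph.cycleGraph 4).Adj 1 2 := by decide
lemma adj23 : (SimpleGraph.cycleGraph 4).Adj 2 3 := by decide
lemma adj03 : (SimpleGraph.cycleGraph 4).Adj 0 3 := by decide

lemma mul_f02_mem (v : σ4) (hv : vtx v ∈ ({1, 3} : Finset (Fin 4))) :
    X v * bedge K 0 2 ∈ J4 K := by
  have e01 := bedge_mem_J4 K 0 1 adj01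
  have e12 := bedge_mem_J4 K 1 2 adj12
  have e23 := bedge_mem_J4 K 2 3 adj23
  have e03 := bedge_mem_J4 K 0 3 adj03
  have hv' : v = Sum.inl 1 ∨ v = Sum.inr 1 ∨ v = Sum.inl 3 ∨ v = Sum.inr 3 := by
    rcases v with a | a <;> fin_cases a <;> revert hv <;> decide
  rcases hv' with rfl | rfl | rfl | rfl
  · rw [show X (Sum.inl (1:Fin 4)) * bedge K 0 2
      = X (Sum.inl 0) * bedge K 1 2 + X (Sum.inl 2) * bedge K 0 1 by rw [bedge, bedge, bedge]; ring]
    exact add_mem (Ideal.mul_mem_left _ _ e12) (Ideal.mul_mem_left _ _ e01)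
  · rw [show X (Sum.inr (1:Fin 4)) * bedge K 0 2
      = X (Sum.inr 0) * bedge K 1 2 + X (Sum.inr 2) * bedge K 0 1 by rw [bedge, bedge, bedge]; ring]
    exact add_mem (Ideal.mul_mem_left _ _ e12) (Ideal.mul_mem_left _ _ e01)
  · rw [show X (Sum.inl (3:Fin 4)) * bedge K 0 2
      = X (Sum.inl 2) * bedge K 0 3 - X (Sum.inl 0) * bedge K 2 3 by rw [bedge, bedge, bedge]; ring]
    exact sub_mem (Ideal.mul_mem_left _ _ e03) (Ideal.mul_mem_left _ _ e23)
  · rw [show X (Sum.inr (3:Fin 4)) * bedge K 0 2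
      = X (Sum.inr 2) * bedge K 0 3 - X (Sum.inr 0) * bedge K 2 3 by rw [bedge, bedge, bedge]; ring]
    exact sub_mem (Ideal.mul_mem_left _ _ e03) (Ideal.mul_mem_left _ _ e23)

lemma mul_f13_mem (v : σ4) (hv : vtx v ∈ ({0, 2} : Finset (Fin 4))) :
    X v * bedge K 1 3 ∈ J4 K := by
  have e01 := bedge_mem_J4 K 0 1 adj01
  have e12 := bedge_mem_J4 K 1 2 adj12
  have e23 := bedge_mem_J4 K 2 3 adj23
  have e03 := bedge_mem_J4 K 0 3 adj03
  have hv' : v = Sum.inl 0 ∨ v = Sum.inr 0 ∨ v = Sum.inl 2 ∨ v = Sum.inr 2 := by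
    rcases v with a | a <;> fin_cases a <;> revert hv <;> decide
  rcases hv' with rfl | rfl | rfl | rfl
  · rw [show X (Sum.inl (0:Fin 4)) * bedge K 1 3
      = X (Sum.inl 1) * bedge K 0 3 - X (Sum.inl 3) * bedge K 0 1 by rw [bedge, bedge, bedge]; ring]
    exact sub_mem (Ideal.mul_mem_left _ _ e03) (Ideal.mul_mem_left _ _ e01)
  · rw [show X (Sum.inr (0:Fin 4)) * bedge K 1 3
      = X (Sum.inr 1) * bedge K 0 3 - X (Sum.inr 3) * bedge K 0 1 by rw [bedge, bedge, bedge]; ring]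
    exact sub_mem (Ideal.mul_mem_left _ _ e03) (Ideal.mul_mem_left _ _ e01)
  · rw [show X (Sum.inl (2:Fin 4)) * bedge K 1 3
      = X (Sum.inl 1) * bedge K 2 3 + X (Sum.inl 3) * bedge K 1 2 by rw [bedge, bedge, bedge]; ring]
    exact add_mem (Ideal.mul_mem_left _ _ e23) (Ideal.mul_mem_left _ _ e12)
  · rw [show X (Sum.inr (2:Fin 4)) * bedge K 1 3
      = X (Sum.inr 1) * bedge K 2 3 + X (Sum.inr 3) * bedge K 1 2 by rw [bedge, bedge, bedge]; ring]
    exact add_mem (Ideal.mul_mem_left _ _ e23) (Ideal.mul_mem_left _ _ e12)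

end Identities

lemma psi_f02 : psi K {1, 3} (bedge K 0 2) = bedge K 0 2 := by
  simp [psi, bedge, vtx]

lemma psi_f13 : psi K {0, 2} (bedge K 1 3) = bedge K 1 3 := by
  simp [psi, bedge, vtx]

lemma X_mul_X_eq_monomial (a b : σ4) :
    (X a * X b : R4 K) = monomial (Finsupp.single a 1 + Finsupp.single b 1) 1 := by
  rw [X, X, monomial_mul, mul_one]

lemma bedge_ne_zero (i j : Fin 4) (h : i ≠ j) : bedge K i j ≠ 0 := by
  intro h0
  have hc := congrArg (coeff (Finsupp.single (Sum.inl i) 1 + Finsupp.single (Sum.inr j) 1)) h0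
  rw [bedge, coeff_sub, X_mul_X_eq_monomial, X_mul_X_eq_monomial, coeff_monomial,
    coeff_monomial, if_pos rfl, coeff_zero] at hc
  rw [if_neg ?_] at hc
  · simpa using hc
  · intro he
    have := DFunLike.congr_fun he (Sum.inl i)
    simp [Finsupp.single_apply] at this
    exact h this.symm

lemma f02_notin_P1 : bedge K 0 2 ∉ PV K {1, 3} := by
  rw [PV_eq_ker]
  intro h
  have : psi K {1,3} (bedge K 0 2) = 0 := h
  rw [psi_f02] at this
  exact bedge_ne_zero K 0 2 (by decide) this

lemma f13_notin_P2 : bedge K 1 3 ∉ PV K {0, 2} := by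
  rw [PV_eq_ker]
  intro h
  have : psi K {0,2} (bedge K 1 3) = 0 := h
  rw [psi_f13] at this
  exact bedge_ne_zero K 1 3 (by decide) this

lemma phi_X_ne_zero (s : σ4) : phi K (X s) ≠ 0 := by
  rcases s with a | a <;>
    · simp only [phi, aeval_X, Sum.elim_inl, Sum.elim_inr]
      exact mul_ne_zero (X_ne_zero _) (X_ne_zero _)

lemma x1x2_notin_P0 : (X (Sum.inl 1) * X (Sum.inl 2) : R4 K) ∉ RingHom.ker (phi K).toRingHom := by
  intro h
  have h' : phi K (X (Sum.inl 1) * X (Sum.inl 2)) = 0 := h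
  rw [map_mul] at h'
  rcases mul_eq_zero.mp h' with h'' | h'' <;> exact phi_X_ne_zero K _ h''

lemma X_notin_PV (s : σ4) (A : Finset (Fin 4)) (h : vtx s ∉ A) : (X s : R4 K) ∉ PV K A := by
  intro hm
  rw [PV] at hm
  obtain ⟨s', hs', hne⟩ := mem_ideal_span_X_image.mp hm (Finsupp.single s 1)
    (by rw [support_X]; exact Finset.mem_singleton_self _)
  rw [Finsupp.single_apply] at hne
  have : s = s' := by by_contra hss; simp [hss] at hne
  subst this
  exact h hs'

def degT (m : σ4 →₀ ℕ) : ℕ := ∑ s : σ4, m s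

lemma weight_one_eq_degT (m : σ4 →₀ ℕ) : Finsupp.weight (1 : σ4 → ℕ) m = degT m := by
  rw [Finsupp.weight_apply, Finsupp.sum_fintype]
  · simp [degT]
  · intro s; simp

lemma degT_add (a b : σ4 →₀ ℕ) : degT (a + b) = degT a + degT b := by
  simp [degT, Finsupp.add_apply, Finset.sum_add_distrib]

lemma degT_single (a : σ4) (k : ℕ) : degT (Finsupp.single a k) = k := by
  simp [degT, Finsupp.single_apply]

lemma I0_deg2 (p : R4 K) (hp : p ∈ I0 K) : ∀ m ∈ p.support, 2 ≤ degT m := by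
  classical
  refine Submodule.span_induction ?_ ?_ ?_ ?_ hp
  · rintro x ⟨i, j, rfl⟩ m hm
    rw [bedge, X_mul_X_eq_monomial, X_mul_X_eq_monomial] at hm
    have hsub := MvPolynomial.support_sub σ4 (monomial (Finsupp.single (Sum.inl i) 1 + Finsupp.single (Sum.inr j) 1) (1:K)) (monomial (Finsupp.single (Sum.inl j) 1 + Finsupp.single (Sum.inr i) 1) 1) hm
    rcases Finset.mem_union.mp hsub with h | h <;>
      · have := support_monomial_subset h
        rw [Finset.mem_singleton] at this
        subst this
        rw [degT_add, degT_single, degT_single]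
  · intro m hm; simp at hm
  · intro x y _ _ hx hy m hm
    rcases Finset.mem_union.mp (MvPolynomial.support_add hm) with h | h
    · exact hx m h
    · exact hy m h
  · intro r x _ hx m hm
    have : m ∈ (r * x).support := by rwa [smul_eq_mul] at hm
    obtain ⟨a, ha, b, hb, rfl⟩ := Finset.mem_add.mp (MvPolynomial.support_mul r x this)
    have := hx b hb
    rw [degT_add]
    omega

lemma homog_I0_eq_zero (f : R4 K) (d : ℕ) (hd : d ≤ 1) (hf : f.IsHomogeneous d)
    (hmem : f ∈ I0 K) : f = 0 := by
  rw [← MvPolynomial.support_eq_empty]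
  refine Finset.eq_empty_of_forall_notMem fun m hm => ?_
  have h1 := hf (MvPolynomial.mem_support_iff.mp hm)
  rw [weight_one_eq_degT] at h1
  have h2 := I0_deg2 K f hmem m hm
  omega

lemma homog_zero_eq_C (f : R4 K) (hf : f.IsHomogeneous 0) : f = C (coeff 0 f) := by
  ext m
  by_cases hm : m = 0
  · subst hm; simp
  · rw [coeff_C, if_neg (Ne.symm hm)]
    by_contra hne
    have h1 := hf hne
    rw [weight_one_eq_degT] at h1
    apply hm
    ext s
    simp only [Finsupp.coe_zero, Pi.zero_apply]
    have : ∀ t ∈ Finset.univ, m t = 0 := by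
      intro t _
      by_contra ht
      have : 0 < ∑ s : σ4, m s := Finset.sum_pos' (fun _ _ => Nat.zero_le _)
        ⟨t, Finset.mem_univ t, Nat.pos_of_ne_zero ht⟩
      rw [show (∑ s : σ4, m s) = degT m from rfl] at this
      omega
    exact this s (Finset.mem_univ s)

lemma colon_span_zero : Submodule.colon (J4 K) (Ideal.span {(0 : R4 K)}) = ⊤ := by
  rw [eq_top_iff]
  intro r _
  rw [Submodule.mem_colon]
  intro p hp
  rw [Ideal.span_singleton_eq_bot.mpr rfl] at hp
  rw [Ideal.mem_bot.mp hp, smul_zero]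
  exact zero_mem _

lemma colon_span_C (c : K) (hc : c ≠ 0) :
    Submodule.colon (J4 K) (Ideal.span {(C c : R4 K)}) = J4 K := by
  have ht : Ideal.span {(C c : R4 K)} = ⊤ :=
    Ideal.span_singleton_eq_top.mpr ((isUnit_iff_ne_zero.mpr hc).map C)
  rw [ht]
  ext r
  rw [Submodule.mem_colon]
  constructor
  · intro h
    have := h 1 Submodule.mem_top
    rwa [smul_eq_mul, mul_one] at this
  · intro hr p _
    rw [smul_eq_mul]
    exact Ideal.mul_mem_right _ _ hr

lemma colon_f02 : Submodule.colon (J4 K) (Ideal.span {(bedge K 0 2 : R4 K)}) = PV K {1, 3} := by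
  apply le_antisymm
  · intro g hg
    have h1 : g * bedge K 0 2 ∈ J4 K := Ideal.mem_colon_span_singleton.mp hg
    exact ((PV_prime K _).mem_or_mem (J4_le_P1 K h1)).resolve_right (f02_notin_P1 K)
  · rw [PV, Ideal.span_le]
    rintro p ⟨s, hs, rfl⟩
    exact Ideal.mem_colon_span_singleton.mpr (mul_f02_mem K s hs)

lemma colon_f13 : Submodule.colon (J4 K) (Ideal.span {(bedge K 1 3 : R4 K)}) = PV K {0, 2} := by
  apply le_antisymm
  · intro g hg
    have h1 : g * bedge K 1 3 ∈ J4 K := Ideal.mem_colon_span_singleton.mp hg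
    exact ((PV_prime K _).mem_or_mem (J4_le_P2 K h1)).resolve_right (f13_notin_P2 K)
  · rw [PV, Ideal.span_le]
    rintro p ⟨s, hs, rfl⟩
    exact Ideal.mem_colon_span_singleton.mpr (mul_f13_mem K s hs)

lemma bedge_cases (i j : Fin 4) : bedge K i j = 0 ∨ bedge K i j ∈ J4 K ∨
    bedge K i j = bedge K 0 2 ∨ bedge K i j = - bedge K 0 2 ∨
    bedge K i j = bedge K 1 3 ∨ bedge K i j = - bedge K 1 3 := by
  have h : (SimpleGraph.cycleGraph 4).Adj i j ∨ i = j ∨ (i = 0 ∧ j = 2) ∨ (i = 2 ∧ j = 0)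
      ∨ (i = 1 ∧ j = 3) ∨ (i = 3 ∧ j = 1) := by
    revert j
    revert i
    decide
  rcases h with h | rfl | ⟨rfl, rfl⟩ | ⟨rfl, rfl⟩ | ⟨rfl, rfl⟩ | ⟨rfl, rfl⟩
  · exact Or.inr (Or.inl (bedge_mem_J4 K _ _ h))
  · left; rw [bedge]; ring
  · right; right; left; rfl
  · right; right; right; left; rw [bedge, bedge]; ring
  · right; right; right; right; left; rfl
  · right; right; right; right; right; rw [bedge, bedge]; ring

lemma colon_x1x2 : Submodule.colon (J4 K) (Ideal.span {(X (Sum.inl 1) * X (Sum.inl 2) : R4 K)})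
    = RingHom.ker (phi K).toRingHom := by
  apply le_antisymm
  · intro g hg
    have h1 : g * (X (Sum.inl 1) * X (Sum.inl 2)) ∈ J4 K := Ideal.mem_colon_span_singleton.mp hg
    exact ((RingHom.ker_isPrime _).mem_or_mem (J4_le_ker_phi K h1)).resolve_right
      (x1x2_notin_P0 K)
  · rw [ker_phi_eq, I0, Ideal.span_le]
    rintro p ⟨i, j, rfl⟩
    rw [SetLike.mem_coe, Ideal.mem_colon_span_singleton]
    rcases bedge_cases K i j with h | h | h | h | h | h
    · rw [h, zero_mul]; exact zero_mem _
    · exact Ideal.mul_mem_right _ _ h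
    · rw [h, show bedge K 0 2 * (X (Sum.inl 1) * X (Sum.inl 2) : R4 K)
        = X (Sum.inl 2) * (X (Sum.inl 1) * bedge K 0 2) by ring]
      exact Ideal.mul_mem_left _ _ (mul_f02_mem K (Sum.inl 1) (by decide))
    · rw [h, neg_mul]
      refine neg_mem ?_
      rw [show bedge K 0 2 * (X (Sum.inl 1) * X (Sum.inl 2) : R4 K)
        = X (Sum.inl 2) * (X (Sum.inl 1) * bedge K 0 2) by ring]
      exact Ideal.mul_mem_left _ _ (mul_f02_mem K (Sum.inl 1) (by decide))
    · rw [h, show bedge K 1 3 * (X (Sum.inl 1) * X (Sum.inl 2) : R4 K)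
        = X (Sum.inl 1) * (X (Sum.inl 2) * bedge K 1 3) by ring]
      exact Ideal.mul_mem_left _ _ (mul_f13_mem K (Sum.inl 2) (by decide))
    · rw [h, neg_mul]
      refine neg_mem ?_
      rw [show bedge K 1 3 * (X (Sum.inl 1) * X (Sum.inl 2) : R4 K)
        = X (Sum.inl 1) * (X (Sum.inl 2) * bedge K 1 3) by ring]
      exact Ideal.mul_mem_left _ _ (mul_f13_mem K (Sum.inl 2) (by decide))

lemma bedge_homog (i j : Fin 4) : (bedge K i j).IsHomogeneous 2 := by
  rw [bedge]
  exact ((isHomogeneous_X _ _).mul (isHomogeneous_X _ _)).sub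
    ((isHomogeneous_X _ _).mul (isHomogeneous_X _ _))

lemma x1x2_homog : (X (Sum.inl 1) * X (Sum.inl 2) : R4 K).IsHomogeneous 2 :=
  (isHomogeneous_X _ _).mul (isHomogeneous_X _ _)

lemma x1_notin_J : X (Sum.inl 1) ∉ J4 K :=
  fun h => X_notin_PV K _ {0, 2} (by decide) (J4_le_P2 K h)

lemma x0_notin_J : X (Sum.inl 0) ∉ J4 K :=
  fun h => X_notin_PV K _ {1, 3} (by decide) (J4_le_P1 K h)

lemma f02_notin_J : bedge K 0 2 ∉ J4 K := fun h => f02_notin_P1 K (J4_le_P1 K h)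

lemma prime_cover (Q : Ideal (R4 K)) (hQ : Q.IsPrime) (hJ : J4 K ≤ Q) :
    PV K {1, 3} ≤ Q ∨ PV K {0, 2} ≤ Q ∨ RingHom.ker (phi K).toRingHom ≤ Q := by
  by_cases h1 : PV K {1, 3} ≤ Q
  · exact Or.inl h1
  by_cases h2 : PV K {0, 2} ≤ Q
  · exact Or.inr (Or.inl h2)
  refine Or.inr (Or.inr ?_)
  have hf02 : bedge K 0 2 ∈ Q := by
    rw [PV, Ideal.span_le] at h1
    obtain ⟨g, hg, hgQ⟩ := Set.not_subset.mp h1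
    obtain ⟨s, hs, rfl⟩ := hg
    exact (hQ.mem_or_mem (hJ (mul_f02_mem K s hs))).resolve_left hgQ
  have hf13 : bedge K 1 3 ∈ Q := by
    rw [PV, Ideal.span_le] at h2
    obtain ⟨g, hg, hgQ⟩ := Set.not_subset.mp h2
    obtain ⟨s, hs, rfl⟩ := hg
    exact (hQ.mem_or_mem (hJ (mul_f13_mem K s hs))).resolve_left hgQ
  rw [ker_phi_eq, I0, Ideal.span_le]
  rintro p ⟨i, j, rfl⟩
  rw [SetLike.mem_coe]
  rcases bedge_cases K i j with h | h | h | h | h | h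
  · rw [h]; exact zero_mem _
  · exact hJ h
  · rw [h]; exact hf02
  · rw [h]; exact neg_mem hf02
  · rw [h]; exact hf13
  · rw [h]; exact neg_mem hf13

lemma deg0_contra (f : R4 K) (hf : f.IsHomogeneous 0) (Q : Ideal (R4 K)) (hQ : Q.IsPrime)
    (hcolon : Submodule.colon (J4 K) (Ideal.span {f}) = Q)
    (hcover : PV K {1, 3} ≤ Q ∨ PV K {0, 2} ≤ Q ∨ RingHom.ker (phi K).toRingHom ≤ Q) :
    False := by
  have hfC := homog_zero_eq_C K f hf
  by_cases hc : coeff 0 f = 0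
  · rw [hc, map_zero] at hfC
    rw [hfC, colon_span_zero] at hcolon
    exact hQ.ne_top hcolon.symm
  · rw [hfC, colon_span_C K _ hc] at hcolon
    subst hcolon
    rcases hcover with h | h | h
    · exact x1_notin_J K (h (X_mem_PV K (Sum.inl 1) _ (by decide)))
    · exact x0_notin_J K (h (X_mem_PV K (Sum.inl 0) _ (by decide)))
    · exact f02_notin_J K (h (by rw [ker_phi_eq]; exact Ideal.subset_span ⟨0, 2, rfl⟩))

lemma deg1_contra (l : R4 K) (hl : l.IsHomogeneous 1) (Q : Ideal (R4 K)) (hQ : Q.IsPrime)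
    (hcolon : Submodule.colon (J4 K) (Ideal.span {l}) = Q)
    (hcover : PV K {1, 3} ≤ Q ∨ PV K {0, 2} ≤ Q ∨ RingHom.ker (phi K).toRingHom ≤ Q) :
    False := by
  have hmul : ∀ g, g ∈ Q → g * l ∈ J4 K := by
    intro g hg
    rw [← hcolon] at hg
    exact Ideal.mem_colon_span_singleton.mp hg
  have hl0 : l = 0 := by
    rcases hcover with h | h | h
    · have hx := hmul (X (Sum.inl 1)) (h (X_mem_PV K (Sum.inl 1) _ (by decide)))
      have h0 : phi K (X (Sum.inl 1) * l) = 0 := J4_le_ker_phi K hx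
      rw [map_mul] at h0
      have hpl : phi K l = 0 := (mul_eq_zero.mp h0).resolve_left (phi_X_ne_zero K _)
      exact homog_I0_eq_zero K l 1 le_rfl hl (ker_phi_eq K ▸ (by exact hpl))
    · have hx := hmul (X (Sum.inl 0)) (h (X_mem_PV K (Sum.inl 0) _ (by decide)))
      have h0 : phi K (X (Sum.inl 0) * l) = 0 := J4_le_ker_phi K hx
      rw [map_mul] at h0
      have hpl : phi K l = 0 := (mul_eq_zero.mp h0).resolve_left (phi_X_ne_zero K _)
      exact homog_I0_eq_zero K l 1 le_rfl hl (ker_phi_eq K ▸ (by exact hpl))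
    · have h02 : bedge K 0 2 ∈ Q := h (by rw [ker_phi_eq]; exact Ideal.subset_span ⟨0, 2, rfl⟩)
      have h13 : bedge K 1 3 ∈ Q := h (by rw [ker_phi_eq]; exact Ideal.subset_span ⟨1, 3, rfl⟩)
      have hm1 : l ∈ PV K {1, 3} := by
        have hx := J4_le_P1 K (hmul _ h02)
        rw [PV_eq_ker] at hx ⊢
        have : psi K {1,3} (bedge K 0 2 * l) = 0 := hx
        rw [map_mul, psi_f02] at this
        exact (mul_eq_zero.mp this).resolve_left
          (fun hh => bedge_ne_zero K 0 2 (by decide) hh)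
      have hm2 : l ∈ PV K {0, 2} := by
        have hx := J4_le_P2 K (hmul _ h13)
        rw [PV_eq_ker] at hx ⊢
        have : psi K {0,2} (bedge K 1 3 * l) = 0 := hx
        rw [map_mul, psi_f13] at this
        exact (mul_eq_zero.mp this).resolve_left
          (fun hh => bedge_ne_zero K 1 3 (by decide) hh)
      rw [← MvPolynomial.support_eq_empty]
      refine Finset.eq_empty_of_forall_notMem fun m hm => ?_
      obtain ⟨s1, hs1, hm1'⟩ := mem_ideal_span_X_image.mp hm1 m hm
      obtain ⟨s2, hs2, hm2'⟩ := mem_ideal_span_X_image.mp hm2 m hm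
      have hne : s1 ≠ s2 := by
        rintro rfl
        have hmem : vtx s1 ∈ ({1, 3} : Finset (Fin 4)) ∩ {0, 2} := Finset.mem_inter.mpr ⟨hs1, hs2⟩
        rw [show ({1, 3} : Finset (Fin 4)) ∩ {0, 2} = ∅ by decide] at hmem
        exact Finset.notMem_empty _ hmem
      have hdeg := hl (MvPolynomial.mem_support_iff.mp hm)
      rw [weight_one_eq_degT] at hdeg
      have hge : m s1 + m s2 ≤ degT m := by
        rw [degT, ← Finset.sum_pair hne]
        exact Finset.sum_le_sum_of_subset (Finset.subset_univ _)
      omega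
  rw [hl0, colon_span_zero] at hcolon
  exact hQ.ne_top hcolon.symm

lemma vLocal_eq_two (P : Ideal (R4 K))
    (hP : P = PV K {1, 3} ∨ P = PV K {0, 2} ∨ P = RingHom.ker (phi K).toRingHom) :
    vLocal K (J4 K) P = 2 := by
  have hQ : P.IsPrime := by
    rcases hP with rfl | rfl | rfl
    · exact PV_prime K _
    · exact PV_prime K _
    · exact RingHom.ker_isPrime _
  have hmem : 2 ∈ {d : ℕ | ∃ f : R4 K, f.IsHomogeneous d ∧
      Submodule.colon (J4 K) (Ideal.span {f}) = P} := by
    rcases hP with rfl | rfl | rfl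
    · exact ⟨bedge K 0 2, bedge_homog K 0 2, colon_f02 K⟩
    · exact ⟨bedge K 1 3, bedge_homog K 1 3, colon_f13 K⟩
    · exact ⟨X (Sum.inl 1) * X (Sum.inl 2), x1x2_homog K, colon_x1x2 K⟩
  have hcover : PV K {1, 3} ≤ P ∨ PV K {0, 2} ≤ P ∨ RingHom.ker (phi K).toRingHom ≤ P := by
    rcases hP with rfl | rfl | rfl
    · exact Or.inl le_rfl
    · exact Or.inr (Or.inl le_rfl)
    · exact Or.inr (Or.inr le_rfl)
  apply le_antisymm
  · exact Nat.sInf_le hmem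
  · apply le_csInf ⟨2, hmem⟩
    rintro d ⟨f, hf, hc⟩
    match d with
    | 0 => exact absurd (deg0_contra K f hf P hQ hc hcover) not_false
    | 1 => exact absurd (deg1_contra K f hf P hQ hc hcover) not_false
    | (n + 2) => omega

lemma minimal_classify (P : Ideal (R4 K)) (hP : P ∈ (J4 K).minimalPrimes) :
    P = PV K {1, 3} ∨ P = PV K {0, 2} ∨ P = RingHom.ker (phi K).toRingHom := by
  obtain ⟨⟨hprime, hle⟩, hmin⟩ := hP
  rcases prime_cover K P hprime hle with h | h | h
  · exact Or.inl (le_antisymm (hmin ⟨PV_prime K _, J4_le_P1 K⟩ h) h)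
  · exact Or.inr (Or.inl (le_antisymm (hmin ⟨PV_prime K _, J4_le_P2 K⟩ h) h))
  · exact Or.inr (Or.inr (le_antisymm
      (hmin ⟨RingHom.ker_isPrime _, J4_le_ker_phi K⟩ h) h))

lemma vNumber_eq_two : vNumber K (J4 K) = 2 := by
  have hassoc : IsAssociatedPrime
      (Submodule.colon (J4 K) (Ideal.span {(bedge K 0 2 : R4 K)})) (R4 K ⧸ J4 K) := by
    rw [colon_f02]
    refine ⟨PV_prime K _, Submodule.Quotient.mk (bedge K 0 2), ?_⟩
    have he : (⊥ : Submodule (R4 K) (R4 K ⧸ J4 K)).colon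
        {Submodule.Quotient.mk (bedge K 0 2)} = PV K {1, 3} := by
      rw [← colon_f02 K]
      ext r
      rw [Submodule.mem_colon_singleton, Submodule.mem_bot, ← Submodule.Quotient.mk_smul,
        Submodule.Quotient.mk_eq_zero, smul_eq_mul, Ideal.mem_colon_span_singleton]
    rw [he, (PV_prime K _).radical]
  have hmem : 2 ∈ {d : ℕ | ∃ f : R4 K, f.IsHomogeneous d ∧
      IsAssociatedPrime (Submodule.colon (J4 K) (Ideal.span {f})) (R4 K ⧸ J4 K)} :=
    ⟨bedge K 0 2, bedge_homog K 0 2, hassoc⟩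
  apply le_antisymm
  · exact Nat.sInf_le hmem
  · apply le_csInf ⟨2, hmem⟩
    rintro d ⟨f, hf, hA⟩
    have hQ : (Submodule.colon (J4 K) (Ideal.span {f})).IsPrime := hA.1
    have hle : J4 K ≤ Submodule.colon (J4 K) (Ideal.span {f}) := by
      intro r hr
      rw [Submodule.mem_colon]
      intro p _
      rw [smul_eq_mul]
      exact Ideal.mul_mem_right _ _ hr
    have hcover := prime_cover K _ hQ hle
    match d with
    | 0 => exact absurd (deg0_contra K f hf _ hQ rfl hcover) not_false
    | 1 => exact absurd (deg1_contra K f hf _ hQ rfl hcover) not_false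
    | (n + 2) => omega


end Dev

theorem statement_14 :
    (∀ P ∈ (beIdeal K (SimpleGraph.cycleGraph 4)).minimalPrimes,
      vLocal K (beIdeal K (SimpleGraph.cycleGraph 4)) P = 2) ∧
    vNumber K (beIdeal K (SimpleGraph.cycleGraph 4)) = 2 := by
  constructor
  · intro P hP
    exact vLocal_eq_two K P (minimal_classify K P hP)
  · exact vNumber_eq_two K

end Paper
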